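/- arXiv:0901.4138 — 3 statements merged into one kernel-verified Lean document; each statement's English description precedes it below -/
import Mathlib

section
/- For chi-square random variables χ²_1,...,χ²_M where χ²_k has k degrees of freedom (not necessarily independent), lim_{M→∞} E[max_{1≤k≤M} χ²_k / M] = 1. -/
open MeasureTheory ProbabilityTheory Filter

namespace ChiAux

open Real

lemma pdf_exp_eq {a r l x : ℝ} (hl : 0 ≤ l) (hlr : l < r) :
    ENNReal.ofReal (exp (l * x)) * gammaPDF a r x
      = ENNReal.ofReal ((r / (r - l)) ^ a) * gammaPDF a (r - l) x := by
  have hr : 0 < r := lt_of_le_of_lt hl hlr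
  have hrl : 0 < r - l := by linarith
  rcases le_or_gt 0 x with hx | hx
  · rw [gammaPDF_of_nonneg hx, gammaPDF_of_nonneg hx,
      ← ENNReal.ofReal_mul (exp_nonneg _), ← ENNReal.ofReal_mul (by positivity)]
    congr 1
    have h1 : (r / (r - l)) ^ a * (r - l) ^ a = r ^ a := by
      rw [Real.div_rpow hr.le hrl.le, div_mul_cancel₀ _ (rpow_pos_of_pos hrl a).ne']
    have h2 : exp (l * x) * exp (-(r * x)) = exp (-((r - l) * x)) := by
      rw [← Real.exp_add]; ring_nf
    calc exp (l * x) * (r ^ a / Gamma a * x ^ (a - 1) * exp (-(r * x)))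
        = (r ^ a / Gamma a * x ^ (a - 1)) * (exp (l * x) * exp (-(r * x))) := by ring
      _ = (r ^ a / Gamma a * x ^ (a - 1)) * exp (-((r - l) * x)) := by rw [h2]
      _ = (r / (r - l)) ^ a * ((r - l) ^ a / Gamma a * x ^ (a - 1) * exp (-((r - l) * x))) := by
          rw [← h1]; ring
  · rw [gammaPDF_of_neg hx, gammaPDF_of_neg hx, mul_zero, mul_zero]

lemma lintegral_exp_gamma {a r l : ℝ} (ha : 0 < a) (hl : 0 ≤ l) (hlr : l < r) :
    ∫⁻ x, ENNReal.ofReal (exp (l * x)) ∂(gammaMeasure a r)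
      = ENNReal.ofReal ((r / (r - l)) ^ a) := by
  have hrl : 0 < r - l := by linarith
  have hg : Measurable fun x : ℝ => ENNReal.ofReal (exp (l * x)) := by fun_prop
  have hf : Measurable (gammaPDF a r) := (measurable_gammaPDFReal a r).ennreal_ofReal
  rw [gammaMeasure, lintegral_withDensity_eq_lintegral_mul _ hf hg]
  simp only [Pi.mul_apply]
  calc ∫⁻ x, gammaPDF a r x * ENNReal.ofReal (exp (l * x))
      = ∫⁻ x, ENNReal.ofReal ((r / (r - l)) ^ a) * gammaPDF a (r - l) x := by
        congr 1; ext x; rw [mul_comm]; exact pdf_exp_eq hl hlr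
    _ = ENNReal.ofReal ((r / (r - l)) ^ a) := by
        have hf2 : Measurable (gammaPDF a (r - l)) :=
          (measurable_gammaPDFReal a (r - l)).ennreal_ofReal
        rw [lintegral_const_mul _ hf2,
          lintegral_gammaPDF_eq_one ha hrl, mul_one]

lemma pdf_id_eq {a r x : ℝ} (ha : 0 < a) (hr : 0 < r) :
    ENNReal.ofReal x * gammaPDF a r x
      = ENNReal.ofReal (a / r) * gammaPDF (a + 1) r x := by
  rcases le_or_gt 0 x with hx | hx
  · rw [gammaPDF_of_nonneg hx, gammaPDF_of_nonneg hx,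
      ← ENNReal.ofReal_mul hx, ← ENNReal.ofReal_mul (by positivity)]
    congr 1
    have hG : Gamma (a + 1) = a * Gamma a := Real.Gamma_add_one ha.ne'
    have hGa : Gamma a ≠ 0 := (Gamma_pos_of_pos ha).ne'
    have hr1 : r ^ (a + 1) = r ^ a * r := Real.rpow_add_one hr.ne' a
    rcases eq_or_lt_of_le hx with hx0 | hx0
    · rw [← hx0]
      rw [Real.zero_rpow (by linarith : a + 1 - 1 ≠ 0)]
      ring
    · have hxa : x * x ^ (a - 1) = x ^ a := by
        nth_rewrite 1 [← Real.rpow_one x]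
        rw [← Real.rpow_add hx0]; ring_nf
      have : x ^ (a + 1 - 1) = x ^ a := by norm_num
      rw [this, hG, hr1, ← hxa]
      field_simp
  · rw [gammaPDF_of_neg hx, gammaPDF_of_neg hx, mul_zero, mul_zero]

lemma lintegral_id_gamma {a r : ℝ} (ha : 0 < a) (hr : 0 < r) :
    ∫⁻ x, ENNReal.ofReal x ∂(gammaMeasure a r) = ENNReal.ofReal (a / r) := by
  have hf : Measurable (gammaPDF a r) := (measurable_gammaPDFReal a r).ennreal_ofReal
  rw [gammaMeasure, lintegral_withDensity_eq_lintegral_mul _ hf ENNReal.measurable_ofReal]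
  simp only [Pi.mul_apply]
  calc ∫⁻ x, gammaPDF a r x * ENNReal.ofReal x
      = ∫⁻ x, ENNReal.ofReal (a / r) * gammaPDF (a + 1) r x := by
        congr 1; ext x; rw [mul_comm]; exact pdf_id_eq ha hr
    _ = ENNReal.ofReal (a / r) := by
        have hf2 : Measurable (gammaPDF (a + 1) r) :=
          (measurable_gammaPDFReal (a + 1) r).ennreal_ofReal
        rw [lintegral_const_mul _ hf2,
          lintegral_gammaPDF_eq_one (by linarith) hr, mul_one]

lemma gamma_neg_null {a r : ℝ} : gammaMeasure a r (Set.Iio 0) = 0 := by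
  rw [gammaMeasure, withDensity_apply _ measurableSet_Iio]
  exact lintegral_gammaPDF_of_nonpos le_rfl

end ChiAux

/-- The chi-square distribution with `k` degrees of freedom, as the Gamma distribution
with shape `k/2` and rate `1/2`. -/
noncomputable def chiSqMeasure (k : ℕ) : Measure ℝ :=
  gammaMeasure ((k : ℝ) / 2) (1 / 2)

/-- For (possibly dependent) chi-square random variables `χ²_k` with `k` degrees of
freedom, `E[max_{1 ≤ k ≤ M} χ²_k / M] → 1` as `M → ∞`. -/
theorem expectation_max_chiSq_tendsto_one
    {Ω : Type*} [MeasurableSpace Ω] (μ : Measure Ω) [IsProbabilityMeasure μ]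
    (X : ℕ → Ω → ℝ)
    (hlaw : ∀ k, 1 ≤ k → μ.map (X k) = chiSqMeasure k) :
    Tendsto (fun M : ℕ => (∫ ω, ⨆ k : Fin M, X (k + 1) ω ∂μ) / M)
      atTop (nhds 1) := by
  classical
  have hprob : ∀ k : ℕ, 1 ≤ k → IsProbabilityMeasure (chiSqMeasure k) := by
    intro k hk
    have : (0:ℝ) < (k : ℝ) / 2 := by
      have : (1:ℝ) ≤ (k:ℝ) := by exact_mod_cast hk
      linarith
    exact isProbabilityMeasure_gammaMeasure this (by norm_num)
  have hae : ∀ k, 1 ≤ k → AEMeasurable (X k) μ := by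
    intro k hk
    by_contra h
    have h0 : μ.map (X k) = 0 := Measure.map_of_not_aemeasurable h
    have h1 : (chiSqMeasure k) Set.univ = 1 := (hprob k hk).measure_univ
    rw [← hlaw k hk, h0] at h1
    simp at h1
  set Y : ℕ → Ω → ℝ := fun k =>
    if h : AEMeasurable (X k) μ then h.mk (X k) else 0 with hYdef
  have hY : ∀ k, Measurable (Y k) := by
    intro k
    by_cases h : AEMeasurable (X k) μ
    · simpa [hYdef, h] using h.measurable_mk
    · simp [hYdef, h]; exact measurable_const
  have hXY : ∀ k, 1 ≤ k → X k =ᵐ[μ] Y k := by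
    intro k hk
    simpa [hYdef, hae k hk] using (hae k hk).ae_eq_mk
  have hYlaw : ∀ k, 1 ≤ k → μ.map (Y k) = chiSqMeasure k := by
    intro k hk
    rw [← Measure.map_congr (hXY k hk)]
    exact hlaw k hk
  -- reduce to Y
  have hEq : ∀ M : ℕ, (∫ ω, ⨆ k : Fin M, X (k + 1) ω ∂μ)
      = ∫ ω, ⨆ k : Fin M, Y (k + 1) ω ∂μ := by
    intro M
    apply integral_congr_ae
    have hsect : ∀ᵐ ω ∂μ, ∀ k : ℕ, X (k + 1) ω = Y (k + 1) ω :=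
      ae_all_iff.2 fun k => hXY (k + 1) (Nat.succ_le_succ (Nat.zero_le _))
    filter_upwards [hsect] with ω hω
    exact iSup_congr fun k => hω k
  simp only [hEq]
  -- basic facts about Y k, k ≥ 1
  have hYnn : ∀ k, 1 ≤ k → ∀ᵐ ω ∂μ, 0 ≤ Y k ω := by
    intro k hk
    rw [ae_iff]
    have : {ω | ¬ 0 ≤ Y k ω} = Y k ⁻¹' Set.Iio 0 := by
      ext ω; simp [not_le]
    rw [this, ← Measure.map_apply (hY k) measurableSet_Iio, hYlaw k hk]
    exact ChiAux.gamma_neg_null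
  have hk2 : ∀ k : ℕ, 1 ≤ k → (0:ℝ) < (k : ℝ) / 2 := by
    intro k hk
    have : (1:ℝ) ≤ (k:ℝ) := by exact_mod_cast hk
    linarith
  have hlint : ∀ k, 1 ≤ k → ∫⁻ ω, ENNReal.ofReal (Y k ω) ∂μ = ENNReal.ofReal k := by
    intro k hk
    rw [← lintegral_map ENNReal.measurable_ofReal (hY k), hYlaw k hk, chiSqMeasure,
      ChiAux.lintegral_id_gamma (hk2 k hk) (by norm_num)]
    congr 1
    ring
  have hYint : ∀ k, 1 ≤ k → Integrable (Y k) μ := by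
    intro k hk
    refine ⟨(hY k).aestronglyMeasurable, ?_⟩
    rw [hasFiniteIntegral_iff_norm]
    have : ∫⁻ ω, ENNReal.ofReal ‖Y k ω‖ ∂μ = ∫⁻ ω, ENNReal.ofReal (Y k ω) ∂μ := by
      apply lintegral_congr_ae
      filter_upwards [hYnn k hk] with ω hω
      rw [Real.norm_eq_abs, abs_of_nonneg hω]
    rw [this, hlint k hk]
    exact ENNReal.ofReal_lt_top
  have hYmean : ∀ k, 1 ≤ k → ∫ ω, Y k ω ∂μ = k := by
    intro k hk
    rw [integral_eq_lintegral_of_nonneg_ae (hYnn k hk) (hY k).aestronglyMeasurable,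
      hlint k hk, ENNReal.toReal_ofReal (Nat.cast_nonneg k)]
  have hexpint : ∀ l : ℝ, 0 ≤ l → l < 1/2 → ∀ k, 1 ≤ k →
      Integrable (fun ω => Real.exp (l * Y k ω)) μ ∧
      ∫ ω, Real.exp (l * Y k ω) ∂μ = ((1/2) / (1/2 - l)) ^ ((k:ℝ)/2) := by
    intro l hl hl2 k hk
    have hmeas : Measurable fun ω => Real.exp (l * Y k ω) := ((hY k).const_mul l).exp
    have hml : ∫⁻ ω, ENNReal.ofReal (Real.exp (l * Y k ω)) ∂μ
        = ENNReal.ofReal (((1/2) / (1/2 - l)) ^ ((k:ℝ)/2)) := by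
      have hg : Measurable fun x : ℝ => ENNReal.ofReal (Real.exp (l * x)) := by fun_prop
      rw [← lintegral_map hg (hY k), hYlaw k hk, chiSqMeasure,
        ChiAux.lintegral_exp_gamma (hk2 k hk) hl hl2]
    have hint : Integrable (fun ω => Real.exp (l * Y k ω)) μ := by
      refine ⟨hmeas.aestronglyMeasurable, ?_⟩
      rw [hasFiniteIntegral_iff_norm]
      have : ∫⁻ ω, ENNReal.ofReal ‖Real.exp (l * Y k ω)‖ ∂μ
          = ∫⁻ ω, ENNReal.ofReal (Real.exp (l * Y k ω)) ∂μ :=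
        lintegral_congr fun ω => by rw [Real.norm_eq_abs, abs_of_pos (Real.exp_pos _)]
      rw [this, hml]
      exact ENNReal.ofReal_lt_top
    refine ⟨hint, ?_⟩
    rw [integral_eq_lintegral_of_nonneg_ae (ae_of_all _ fun ω => (Real.exp_pos _).le)
      hmeas.aestronglyMeasurable, hml]
    have hbnn : (0:ℝ) ≤ (1/2) / (1/2 - l) := by
      have : (0:ℝ) < 1/2 - l := by linarith
      positivity
    rw [ENNReal.toReal_ofReal (Real.rpow_nonneg hbnn _)]
  have hSmeas : ∀ M : ℕ, 1 ≤ M → Measurable fun ω => ⨆ k : Fin M, Y (k + 1) ω := by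
    intro M hM
    haveI : Nonempty (Fin M) := ⟨⟨0, hM⟩⟩
    have : (fun ω => ⨆ k : Fin M, Y (k + 1) ω)
        = Finset.univ.sup' Finset.univ_nonempty (fun k : Fin M => Y (k + 1)) := by
      ext ω
      rw [Finset.sup'_apply, Finset.sup'_univ_eq_ciSup]
    rw [this]
    exact Finset.measurable_sup' _ fun k _ => hY _
  have hlbYM : ∀ M : ℕ, 1 ≤ M → ∀ ω, Y M ω ≤ ⨆ k : Fin M, Y (k + 1) ω := by
    intro M hM ω
    haveI : Nonempty (Fin M) := ⟨⟨0, hM⟩⟩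
    have h := le_ciSup (f := fun k : Fin M => Y (k + 1) ω)
      (Set.Finite.bddAbove (Set.finite_range _)) ⟨M - 1, by omega⟩
    have he : M - 1 + 1 = M := by omega
    simpa [he] using h
  have hbound : ∀ l t : ℝ, 0 < l → l < 1/2 → ∀ M : ℕ, 1 ≤ M →
      Integrable (fun ω => ⨆ k : Fin M, Y (k + 1) ω) μ ∧
      ∫ ω, ⨆ k : Fin M, Y (k + 1) ω ∂μ
        ≤ t + (Real.exp (-(l * t)) / l)
            * ∑ k : Fin M, ((1/2) / (1/2 - l)) ^ ((((k : ℕ) + 1 : ℕ) : ℝ) / 2) := by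
    intro l t hl hl2 M hM
    haveI : Nonempty (Fin M) := ⟨⟨0, hM⟩⟩
    set g : Ω → ℝ := fun ω => t + (Real.exp (-(l * t)) / l)
        * ∑ k : Fin M, Real.exp (l * Y (k + 1) ω) with hgdef
    have hsumint : Integrable (fun ω => ∑ k : Fin M, Real.exp (l * Y (k + 1) ω)) μ :=
      integrable_finset_sum Finset.univ fun k _ => (hexpint l hl.le hl2 (k + 1) (by omega)).1
    have hgint : Integrable g μ := (integrable_const t).add (hsumint.const_mul _)
    have hpt : ∀ ω, (⨆ k : Fin M, Y (k + 1) ω) ≤ g ω := by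
      intro ω
      refine ciSup_le fun k => ?_
      have h1 : Y (k + 1) ω - t ≤ Real.exp (l * (Y (k + 1) ω - t)) / l := by
        rw [le_div_iff₀ hl]
        have h := Real.add_one_le_exp (l * (Y (k + 1) ω - t))
        nlinarith
      have h2 : Real.exp (l * (Y (k + 1) ω - t))
          = Real.exp (-(l * t)) * Real.exp (l * Y (k + 1) ω) := by
        rw [← Real.exp_add]; ring_nf
      have h2' : Real.exp (l * (Y (k + 1) ω - t)) / l
          = Real.exp (-(l * t)) / l * Real.exp (l * Y (k + 1) ω) := by
        rw [h2]; ring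
      have h3 : Real.exp (l * Y (k + 1) ω) ≤ ∑ j : Fin M, Real.exp (l * Y (j + 1) ω) :=
        Finset.single_le_sum (f := fun j : Fin M => Real.exp (l * Y (j + 1) ω))
          (fun j _ => (Real.exp_pos _).le) (Finset.mem_univ k)
      have h4 : Real.exp (-(l * t)) / l * Real.exp (l * Y (k + 1) ω)
          ≤ Real.exp (-(l * t)) / l * ∑ j : Fin M, Real.exp (l * Y (j + 1) ω) :=
        mul_le_mul_of_nonneg_left h3 (by positivity)
      have hgω : g ω = t + Real.exp (-(l * t)) / l * ∑ j : Fin M, Real.exp (l * Y (j + 1) ω) := rfl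
      rw [hgω]
      rw [h2'] at h1
      linarith
    have hSint : Integrable (fun ω => ⨆ k : Fin M, Y (k + 1) ω) μ := by
      have hYM : Integrable (Y M) μ := hYint M hM
      refine Integrable.mono' (hYM.abs.add hgint.abs) (hSmeas M hM).aestronglyMeasurable ?_
      refine ae_of_all _ fun ω => ?_
      rw [Real.norm_eq_abs, abs_le]
      have hub := hpt ω
      have hlb := hlbYM M hM ω
      constructor
      · have h5 := neg_abs_le (Y M ω)
        have h6 := abs_nonneg (g ω)
        simp only [Pi.add_apply]
        linarith
      · have h5 := le_abs_self (g ω)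
        have h6 := abs_nonneg (Y M ω)
        simp only [Pi.add_apply]
        linarith
    refine ⟨hSint, ?_⟩
    calc ∫ ω, ⨆ k : Fin M, Y (k + 1) ω ∂μ ≤ ∫ ω, g ω ∂μ :=
          integral_mono hSint hgint hpt
      _ = t + (Real.exp (-(l * t)) / l)
            * ∑ k : Fin M, ((1/2) / (1/2 - l)) ^ ((((k : ℕ) + 1 : ℕ) : ℝ) / 2) := by
          rw [hgdef]
          rw [integral_add (integrable_const t) (hsumint.const_mul _), integral_const]
          simp only [probReal_univ, ENNReal.toReal_one, smul_eq_mul, one_mul]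
          rw [integral_const_mul, integral_finset_sum Finset.univ
            (fun (k : Fin M) _ => (hexpint l hl.le hl2 ((k : ℕ) + 1) (by omega)).1)]
          congr 1
          congr 1
          exact Finset.sum_congr rfl fun (k : Fin M) _ =>
            (hexpint l hl.le hl2 ((k : ℕ) + 1) (by omega)).2
  have hlow : ∀ M : ℕ, 1 ≤ M → (M : ℝ) ≤ ∫ ω, ⨆ k : Fin M, Y (k + 1) ω ∂μ := by
    intro M hM
    have hSint := (hbound (1/4) 0 (by norm_num) (by norm_num) M hM).1
    have h := integral_mono (hYint M hM) hSint (hlbYM M hM)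
    rwa [hYmean M hM] at h
  refine tendsto_order.2 ⟨fun a ha => ?_, fun b hb => ?_⟩
  · filter_upwards [eventually_ge_atTop 1] with M hM
    have h1 := hlow M hM
    have hMpos : (0 : ℝ) < M := by exact_mod_cast hM
    have h2 : (1 : ℝ) ≤ (∫ ω, ⨆ k : Fin M, Y (k + 1) ω ∂μ) / M := by
      rw [le_div_iff₀ hMpos]; linarith
    linarith
  · set ε := (b - 1) / 2 with hεdef
    have hεpos : 0 < ε := by rw [hεdef]; linarith
    set l := ε / (2 * (1 + ε)) with hldef
    have hlpos : 0 < l := by rw [hldef]; positivity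
    have hl2 : l < 1/2 := by
      rw [hldef, div_lt_div_iff₀ (by positivity) (by norm_num)]
      nlinarith
    have hc : (1/2 : ℝ) / (1/2 - l) = 1 + ε := by
      rw [hldef]
      have h1 : (0:ℝ) < 1 + ε := by linarith
      field_simp
      ring
    set ρ := Real.exp (-(l * (1 + ε))) * (1 + ε) ^ ((1:ℝ)/2) with hρdef
    have hρpos : 0 < ρ := by
      rw [hρdef]
      have := Real.rpow_pos_of_pos (show (0:ℝ) < 1 + ε by linarith) ((1:ℝ)/2)
      positivity
    have hρ1 : ρ < 1 := by
      have hsq : ρ ^ 2 = Real.exp (-ε) * (1 + ε) := by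
        rw [hρdef, mul_pow]
        have e1 : Real.exp (-(l * (1 + ε))) ^ 2 = Real.exp (-ε) := by
          rw [← Real.exp_nat_mul]
          congr 1
          rw [hldef]
          have h1 : (1:ℝ) + ε ≠ 0 := by positivity
          field_simp
          ring
        have e2 : ((1 + ε) ^ ((1:ℝ)/2)) ^ 2 = 1 + ε := by
          rw [← Real.rpow_natCast ((1 + ε) ^ ((1:ℝ)/2)) 2,
            ← Real.rpow_mul (by linarith : (0:ℝ) ≤ 1 + ε)]
          norm_num
        rw [e1, e2]
      have hexp : 1 + ε < Real.exp ε := by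
        have := Real.add_one_lt_exp hεpos.ne'
        linarith
      have hlt : ρ ^ 2 < 1 := by
        rw [hsq, Real.exp_neg]
        have h1 := Real.exp_pos ε
        have h2 : Real.exp ε * (Real.exp ε)⁻¹ = 1 := mul_inv_cancel₀ h1.ne'
        nlinarith
      nlinarith
    have htend : Tendsto (fun M : ℕ => (1/l) * ρ ^ M) atTop (nhds 0) := by
      have h := (tendsto_pow_atTop_nhds_zero_of_lt_one hρpos.le hρ1).const_mul (1/l)
      rwa [mul_zero] at h
    have hev : ∀ᶠ M : ℕ in atTop, (1/l) * ρ ^ M < ε := htend.eventually_lt_const hεpos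
    filter_upwards [eventually_ge_atTop 1, hev] with M hM hsmall
    have hMpos : (0 : ℝ) < M := by exact_mod_cast hM
    obtain ⟨hSint, hle⟩ := hbound l ((1 + ε) * M) hlpos hl2 M hM
    have hsum : ∑ k : Fin M, ((1/2 : ℝ) / (1/2 - l)) ^ ((((k : ℕ) + 1 : ℕ) : ℝ) / 2)
        ≤ M * (1 + ε) ^ ((M : ℝ) / 2) := by
      rw [hc]
      calc ∑ k : Fin M, (1 + ε : ℝ) ^ ((((k : ℕ) + 1 : ℕ) : ℝ) / 2)
          ≤ ∑ _k : Fin M, (1 + ε : ℝ) ^ ((M : ℝ) / 2) := by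
            refine Finset.sum_le_sum fun k _ => ?_
            refine Real.rpow_le_rpow_of_exponent_le (by linarith) ?_
            have hkM : ((k : ℕ) + 1 : ℕ) ≤ M := k.isLt
            have : ((((k : ℕ) + 1 : ℕ)) : ℝ) ≤ (M : ℝ) := by exact_mod_cast hkM
            linarith
        _ = M * (1 + ε) ^ ((M : ℝ) / 2) := by
            rw [Finset.sum_const, Finset.card_univ, Fintype.card_fin, nsmul_eq_mul]
    have hρM : Real.exp (-(l * ((1 + ε) * M))) * (1 + ε) ^ ((M : ℝ) / 2) = ρ ^ M := by
      rw [hρdef, mul_pow]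
      congr 1
      · rw [← Real.exp_nat_mul]
        congr 1
        ring
      · rw [← Real.rpow_natCast ((1 + ε) ^ ((1:ℝ)/2)) M,
          ← Real.rpow_mul (by linarith : (0:ℝ) ≤ 1 + ε)]
        congr 1
        ring
    have hmain : (∫ ω, ⨆ k : Fin M, Y (k + 1) ω ∂μ) / M ≤ (1 + ε) + (1/l) * ρ ^ M := by
      rw [div_le_iff₀ hMpos]
      calc ∫ ω, ⨆ k : Fin M, Y (k + 1) ω ∂μ
          ≤ (1 + ε) * M + (Real.exp (-(l * ((1 + ε) * M))) / l)
              * ∑ k : Fin M, ((1/2 : ℝ) / (1/2 - l)) ^ ((((k : ℕ) + 1 : ℕ) : ℝ) / 2) := hle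
        _ ≤ (1 + ε) * M + (Real.exp (-(l * ((1 + ε) * M))) / l)
              * (M * (1 + ε) ^ ((M : ℝ) / 2)) := by
            refine add_le_add le_rfl (mul_le_mul_of_nonneg_left hsum (by positivity))
        _ = ((1 + ε) + (1/l) * ρ ^ M) * M := by
            rw [← hρM]; ring
    calc (∫ ω, ⨆ k : Fin M, Y (k + 1) ω ∂μ) / M ≤ (1 + ε) + (1/l) * ρ ^ M := hmain
      _ < (1 + ε) + ε := by linarith
      _ = b := by rw [hεdef]; ring
end

section
/- If χ²_M is a chi-square random variable with M degrees of freedom and 0 < ε < 1, then P(χ²_M < M(1-ε)) ≤ (M(1-ε))^{M/2} e^{-M/2 + Mε/2} / (ε Γ(M/2) 2^{M/2}), for all M ≥ 2. -/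
open MeasureTheory ProbabilityTheory

set_option maxHeartbeats 1000000 in
/-- Lower-tail bound for the chi-square distribution: for `M ≥ 2` and `0 < ε < 1`,
`P(χ²_M < M(1-ε)) ≤ (M(1-ε))^{M/2} e^{-M/2 + Mε/2} / (ε Γ(M/2) 2^{M/2})`. -/
theorem chiSq_lower_tail_bound
    (M : ℕ) (hM : 2 ≤ M) (ε : ℝ) (hε0 : 0 < ε) (hε1 : ε < 1) :
    (chiSqMeasure M (Set.Iio ((M : ℝ) * (1 - ε)))).toReal
      ≤ ((M : ℝ) * (1 - ε)) ^ ((M : ℝ) / 2)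
          * Real.exp (-(M : ℝ) / 2 + M * ε / 2)
          / (ε * Real.Gamma ((M : ℝ) / 2) * 2 ^ ((M : ℝ) / 2)) := by
  have hM2 : (2:ℝ) ≤ (M:ℝ) := by exact_mod_cast hM
  set a : ℝ := (M:ℝ)/2 with ha_def
  set t : ℝ := (M:ℝ)*(1-ε) with ht_def
  have ha1 : 1 ≤ a := by rw [ha_def]; linarith
  have ha0 : 0 < a := lt_of_lt_of_le one_pos ha1
  have ht0 : 0 < t := mul_pos (by linarith) (by linarith)
  have hta : t = 2*a*(1-ε) := by rw [ht_def, ha_def]; ring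
  have hΓ : 0 < Real.Gamma a := Real.Gamma_pos_of_pos ha0
  have hlogε : Real.log ε ≤ ε - 1 := Real.log_le_sub_one_of_pos hε0
  have hlogε0 : Real.log ε ≤ 0 := Real.log_nonpos hε0.le hε1.le
  -- the constant bound on the density
  set C : ℝ := (1/2:ℝ) ^ a / Real.Gamma a * (t ^ (a-1) * Real.exp (-(1/2*t)) / ε) with hC_def
  have hC0 : 0 ≤ C := by
    apply mul_nonneg
    · positivity
    · positivity
  -- pointwise bound
  have key : ∀ x : ℝ, 0 ≤ x → x ≤ t →
      x ^ (a-1) * Real.exp (-(1/2*x)) ≤ t ^ (a-1) * Real.exp (-(1/2*t)) / ε := by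
    intro x hx0 hxt
    rcases eq_or_lt_of_le hx0 with hx | hx
    · -- x = 0
      rcases eq_or_lt_of_le ha1 with ha | ha
      · -- a = 1
        rw [← hx, ← ha]
        simp only [sub_self, Real.rpow_zero, one_mul, mul_zero, neg_zero, Real.exp_zero]
        rw [le_div_iff₀ hε0, one_mul]
        have h1 : ε = Real.exp (Real.log ε) := (Real.exp_log hε0).symm
        have h2 : Real.exp (Real.log ε) ≤ Real.exp (ε - 1) := Real.exp_le_exp.mpr hlogε
        have h3 : -(1/2*t) = ε - 1 := by rw [hta, ← ha]; ring
        rw [h3]; linarith [h1 ▸ h2]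
      · -- a > 1
        rw [← hx, Real.zero_rpow (by linarith : a - 1 ≠ 0), zero_mul]
        positivity
    · -- x > 0
      have hLHS : x ^ (a-1) * Real.exp (-(1/2*x))
          = Real.exp (Real.log x * (a-1) + -(1/2*x)) := by
        rw [Real.rpow_def_of_pos hx, Real.exp_add]
      have hRHS : t ^ (a-1) * Real.exp (-(1/2*t)) / ε
          = Real.exp (Real.log t * (a-1) + -(1/2*t) - Real.log ε) := by
        rw [Real.rpow_def_of_pos ht0, Real.exp_sub, Real.exp_add, Real.exp_log hε0]
      rw [hLHS, hRHS, Real.exp_le_exp]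
      -- log comparison
      have h1 : (Real.log x - Real.log t) * t ≤ x - t := by
        have hxtpos : 0 < x / t := div_pos hx ht0
        have := Real.log_le_sub_one_of_pos hxtpos
        rw [Real.log_div hx.ne' ht0.ne'] at this
        have h2 : (Real.log x - Real.log t) * t ≤ (x/t - 1) * t :=
          mul_le_mul_of_nonneg_right this ht0.le
        have h3 : (x/t - 1) * t = x - t := by field_simp
        linarith [h3 ▸ h2]
      have h4 : (Real.log x - Real.log t) * t * (a-1) ≤ (x - t) * (a-1) :=
        mul_le_mul_of_nonneg_right h1 (by linarith)
      have h2 : (t - x) * (1 - a*ε) ≤ -Real.log ε * t := by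
        rcases le_or_gt (1 - a*ε) 0 with hc | hc
        · have hL : (t - x) * (1 - a*ε) ≤ 0 := mul_nonpos_of_nonneg_of_nonpos (by linarith) hc
          nlinarith
        · have hL : (t - x) * (1 - a*ε) ≤ t * (1 - a*ε) :=
            mul_le_mul_of_nonneg_right (by linarith) hc.le
          have haε : ε ≤ a * ε := le_mul_of_one_le_left hε0.le ha1
          have h5 : t * (1 - a*ε) ≤ t * (1 - ε) := by nlinarith
          have h6 : t * (1 - ε) ≤ t * (-Real.log ε) :=
            mul_le_mul_of_nonneg_left (by linarith) ht0.le
          nlinarith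
      -- combine: goal * t follows from h4 and h2 (using hta)
      have hid : (x-t)*(a-1) + (t-x)*t/2 = (t-x)*(1-a*ε) := by rw [hta]; ring
      have hGt : (Real.log x * (a-1) + -(1/2*x)
          - (Real.log t * (a-1) + -(1/2*t) - Real.log ε)) * t ≤ 0 := by
        have hring : (Real.log x * (a-1) + -(1/2*x)
            - (Real.log t * (a-1) + -(1/2*t) - Real.log ε)) * t
            = (Real.log x - Real.log t)*t*(a-1) + ((t-x)*t/2 + Real.log ε * t) := by ring
        rw [hring]; linarith [h4, h2, hid]
      have hG := (mul_le_mul_iff_of_pos_right ht0).mp (by simpa using hGt :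
        (Real.log x * (a-1) + -(1/2*x)
          - (Real.log t * (a-1) + -(1/2*t) - Real.log ε)) * t ≤ 0 * t)
      linarith [hG]
  -- now the measure computation
  have hmeas : chiSqMeasure M (Set.Iio t) = ∫⁻ x in Set.Iio t, gammaPDF a (1/2) x := by
    rw [chiSqMeasure, gammaMeasure, withDensity_apply _ measurableSet_Iio, ha_def]
  have hsplit : ∫⁻ x in Set.Iio t, gammaPDF a (1/2) x
      = ∫⁻ x in Set.Ico 0 t, gammaPDF a (1/2) x := by
    rw [← Set.Iio_union_Ico_eq_Iio ht0.le,
      lintegral_union measurableSet_Ico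
        (by simp [Set.disjoint_iff_forall_ne]; intros x hx y hy hyt; intro h; subst h; linarith),
      lintegral_gammaPDF_of_nonpos le_rfl, zero_add]
  have hbound : ∫⁻ x in Set.Ico 0 t, gammaPDF a (1/2) x
      ≤ ENNReal.ofReal (C * t) := by
    calc ∫⁻ x in Set.Ico 0 t, gammaPDF a (1/2) x
        ≤ ∫⁻ _ in Set.Ico 0 t, ENNReal.ofReal C := by
          apply setLIntegral_mono measurable_const
          intro x hx
          rw [gammaPDF_of_nonneg hx.1]
          apply ENNReal.ofReal_le_ofReal
          rw [hC_def]
          have : (1/2:ℝ) ^ a / Real.Gamma a * x ^ (a-1) * Real.exp (-(1/2 * x))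
              = (1/2:ℝ) ^ a / Real.Gamma a * (x ^ (a-1) * Real.exp (-(1/2 * x))) := by ring
          rw [this]
          exact mul_le_mul_of_nonneg_left (key x hx.1 hx.2.le) (by positivity)
      _ = ENNReal.ofReal C * volume (Set.Ico 0 t) := by rw [setLIntegral_const]
      _ = ENNReal.ofReal (C * t) := by
          rw [Real.volume_Ico, sub_zero, ENNReal.ofReal_mul hC0]
  have hfinal : (chiSqMeasure M (Set.Iio t)).toReal ≤ C * t := by
    apply ENNReal.toReal_le_of_le_ofReal (by positivity)
    rw [hmeas, hsplit]; exact hbound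
  refine hfinal.trans (le_of_eq ?_)
  -- C * t = RHS
  have h2a : ((2:ℝ) ^ a)⁻¹ = (1/2:ℝ) ^ a := by
    rw [← Real.inv_rpow (by norm_num : (0:ℝ) ≤ 2)]
    norm_num
  have hexp : Real.exp (-(1/2*t)) = Real.exp (-(M:ℝ)/2 + M*ε/2) := by
    congr 1; rw [ht_def]; ring
  have hrpow : t ^ (a-1) * t = t ^ a := by
    rw [Real.rpow_sub ht0, Real.rpow_one, div_mul_cancel₀ _ ht0.ne']
  have hstep : C * t = (t^(a-1)*t) * Real.exp (-(1/2*t)) / (ε * Real.Gamma a * 2 ^ a) := by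
    rw [hC_def, ← h2a]
    field_simp
  rw [hstep, hrpow, hexp]
end

section
/- The series ∑_{M≥2} P(χ²_M < M(1-ε)) and ∑_{M≥1} M·P(χ²_M > M(1+ε)) both converge, for every fixed ε > 0; consequently, if χ_{M,1},...,χ_{M,M} are (possibly dependent) random variables with χ_{M,k} chi-distributed with k degrees of freedom, then max_{1≤k≤M} χ²_{M,k}/M → 1 almost surely as M → ∞. -/
open MeasureTheory ProbabilityTheory Filter

section ChiAux

open Real Set

lemma gamma_exp_lintegral {a r t : ℝ} (ha : 0 < a) (hr : 0 < r) (ht : t < r) :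
    ∫⁻ x, ENNReal.ofReal (Real.exp (t * x)) ∂(gammaMeasure a r)
      = ENNReal.ofReal ((r / (r - t)) ^ a) := by
  have hrt : 0 < r - t := by linarith
  have hmg : Measurable (gammaPDF a r) := (measurable_gammaPDFReal a r).ennreal_ofReal
  rw [gammaMeasure, lintegral_withDensity_eq_lintegral_mul _ hmg
    (by exact (Real.measurable_exp.comp (measurable_const_mul t)).ennreal_ofReal)]
  have key : ∀ x, gammaPDF a r x * ENNReal.ofReal (Real.exp (t * x))
      = ENNReal.ofReal ((r / (r - t)) ^ a) * gammaPDF a (r - t) x := by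
    intro x
    rcases lt_or_ge x 0 with hx | hx
    · rw [gammaPDF_of_neg hx, gammaPDF_of_neg hx]; simp
    · rw [gammaPDF_of_nonneg hx, gammaPDF_of_nonneg hx,
        ← ENNReal.ofReal_mul (by positivity), ← ENNReal.ofReal_mul (by positivity)]
      congr 1
      have h1 : Real.exp (-(r * x)) * Real.exp (t * x) = Real.exp (-((r - t) * x)) := by
        rw [← Real.exp_add]; ring_nf
      rw [div_rpow hr.le hrt.le]
      have h2 : (r - t) ^ a ≠ 0 := (rpow_pos_of_pos hrt a).ne'
      field_simp
      rw [mul_assoc, mul_comm x t, h1, mul_comm x (r - t)]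
  calc ∫⁻ x, gammaPDF a r x * ENNReal.ofReal (Real.exp (t * x))
      = ∫⁻ x, ENNReal.ofReal ((r / (r - t)) ^ a) * gammaPDF a (r - t) x := by
        simp_rw [key]
    _ = ENNReal.ofReal ((r / (r - t)) ^ a) := by
        have hmg' : Measurable (gammaPDF a (r - t)) :=
          (measurable_gammaPDFReal a (r - t)).ennreal_ofReal
        rw [lintegral_const_mul _ hmg',
          lintegral_gammaPDF_eq_one ha hrt, mul_one]

lemma gamma_chernoff {a t c : ℝ} (ha : 0 < a) (ht : t < 1/2)
    {S : Set ℝ} (hSm : MeasurableSet S) (hS : ∀ x ∈ S, 0 ≤ t * (x - c)) :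
    gammaMeasure a (1/2) S
      ≤ ENNReal.ofReal (Real.exp (-(t * c)) * ((1/2) / (1/2 - t)) ^ a) := by
  have hmeas : Measurable fun x : ℝ => ENNReal.ofReal (Real.exp (t * (x - c))) :=
    Measurable.ennreal_ofReal (by fun_prop)
  calc gammaMeasure a (1/2) S
      = ∫⁻ x in S, 1 ∂(gammaMeasure a (1/2)) := by rw [setLIntegral_one]
    _ ≤ ∫⁻ x in S, ENNReal.ofReal (Real.exp (t * (x - c))) ∂(gammaMeasure a (1/2)) := by
        refine setLIntegral_mono hmeas fun x hx => ?_
        exact ENNReal.one_le_ofReal.mpr (Real.one_le_exp (hS x hx))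
    _ ≤ ∫⁻ x, ENNReal.ofReal (Real.exp (t * (x - c))) ∂(gammaMeasure a (1/2)) :=
        setLIntegral_le_lintegral _ _
    _ = ENNReal.ofReal (Real.exp (-(t * c))) *
          ∫⁻ x, ENNReal.ofReal (Real.exp (t * x)) ∂(gammaMeasure a (1/2)) := by
        have hm2 : Measurable fun x : ℝ => ENNReal.ofReal (Real.exp (t * x)) :=
          Measurable.ennreal_ofReal (by fun_prop)
        rw [← lintegral_const_mul _ hm2]
        congr 1 with x
        rw [← ENNReal.ofReal_mul (Real.exp_nonneg _), ← Real.exp_add]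
        ring_nf
    _ = ENNReal.ofReal (Real.exp (-(t * c)) * ((1/2) / (1/2 - t)) ^ a) := by
        rw [gamma_exp_lintegral ha (by norm_num) ht,
          ← ENNReal.ofReal_mul (Real.exp_nonneg _)]

lemma upper_tail {ε : ℝ} (hε : 0 < ε) {k N : ℕ} (hk : 1 ≤ k) (hkN : k ≤ N)
    {c : ℝ} (hc : (N : ℝ) * (1 + ε) ≤ c) :
    chiSqMeasure k (Set.Ioi c)
      ≤ ENNReal.ofReal ((Real.exp (-(ε/2)) * Real.sqrt (1 + ε)) ^ N) := by
  have h1ε : (0:ℝ) < 1 + ε := by linarith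
  set t : ℝ := ε / (2 * (1 + ε)) with htdef
  have ht0 : 0 < t := by positivity
  have ht : t < 1/2 := by
    rw [htdef, div_lt_iff₀ (by positivity)]
    nlinarith
  have ha : 0 < (k : ℝ) / 2 := by
    have h' : (1:ℝ) ≤ (k:ℝ) := by exact_mod_cast hk
    linarith
  refine le_trans (gamma_chernoff (c := c) ha ht measurableSet_Ioi (fun x hx => ?_)) ?_
  · exact mul_nonneg ht0.le (sub_nonneg.mpr (le_of_lt hx))
  apply ENNReal.ofReal_le_ofReal
  have hratio : (1/2 : ℝ) / (1/2 - t) = 1 + ε := by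
    rw [htdef]; field_simp; try ring
  have hexp : Real.exp (-(t * c)) ≤ Real.exp ((N:ℝ) * (-(ε/2))) := by
    apply Real.exp_le_exp.mpr
    have h2 : t * ((N:ℝ) * (1 + ε)) = (N:ℝ) * (ε/2) := by
      rw [htdef]; field_simp
    have h3 : t * ((N:ℝ) * (1 + ε)) ≤ t * c := mul_le_mul_of_nonneg_left hc ht0.le
    nlinarith
  have hpow : ((1/2 : ℝ) / (1/2 - t)) ^ ((k:ℝ)/2) ≤ (1 + ε) ^ ((N:ℝ)/2) := by
    rw [hratio]
    refine Real.rpow_le_rpow_of_exponent_le (by linarith) ?_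
    have h' : (k:ℝ) ≤ (N:ℝ) := by exact_mod_cast hkN
    linarith
  have hkey : (1 + ε) ^ ((N:ℝ)/2) = Real.sqrt (1 + ε) ^ N := by
    rw [Real.sqrt_eq_rpow, ← Real.rpow_natCast ((1+ε) ^ ((1:ℝ)/2)) N,
      ← Real.rpow_mul h1ε.le]
    ring_nf
  calc Real.exp (-(t * c)) * ((1/2 : ℝ) / (1/2 - t)) ^ ((k:ℝ)/2)
      ≤ Real.exp ((N:ℝ) * (-(ε/2))) * (1 + ε) ^ ((N:ℝ)/2) :=
        mul_le_mul hexp hpow (Real.rpow_nonneg (div_nonneg (by norm_num) (by linarith)) _) (Real.exp_nonneg _)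
    _ = (Real.exp (-(ε/2)) * Real.sqrt (1 + ε)) ^ N := by
        rw [mul_pow, Real.exp_nat_mul, hkey]

lemma lower_tail {ε : ℝ} (hε : 0 < ε) (hε1 : ε < 1) {N : ℕ} (hN : 1 ≤ N) :
    chiSqMeasure N (Set.Iio ((N:ℝ) * (1 - ε)))
      ≤ ENNReal.ofReal ((Real.exp (ε/2) * Real.sqrt (1 - ε)) ^ N) := by
  have h1ε : (0:ℝ) < 1 - ε := by linarith
  set t : ℝ := -(ε / (2 * (1 - ε))) with htdef
  have ht0 : t < 0 := by
    rw [htdef, neg_lt_zero]; positivity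
  have ht : t < 1/2 := ht0.trans (by norm_num)
  have ha : 0 < (N : ℝ) / 2 := by
    have h' : (1:ℝ) ≤ (N:ℝ) := by exact_mod_cast hN
    linarith
  refine le_trans (gamma_chernoff (c := (N:ℝ) * (1 - ε)) ha ht measurableSet_Iio
    (fun x hx => ?_)) ?_
  · have hx' : x < (N:ℝ) * (1 - ε) := hx
    nlinarith
  apply ENNReal.ofReal_le_ofReal
  have hratio : (1/2 : ℝ) / (1/2 - t) = 1 - ε := by
    rw [htdef]; field_simp; ring
  have hexp : -(t * ((N:ℝ) * (1 - ε))) = (N:ℝ) * (ε/2) := by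
    rw [htdef]; field_simp
  have hkey : (1 - ε) ^ ((N:ℝ)/2) = Real.sqrt (1 - ε) ^ N := by
    rw [Real.sqrt_eq_rpow, ← Real.rpow_natCast ((1-ε) ^ ((1:ℝ)/2)) N,
      ← Real.rpow_mul h1ε.le]
    ring_nf
  rw [hratio, hexp, hkey, mul_pow, ← Real.exp_nat_mul]

lemma qup_nonneg {ε : ℝ} (hε : 0 < ε) : 0 ≤ Real.exp (-(ε/2)) * Real.sqrt (1 + ε) :=
  mul_nonneg (Real.exp_nonneg _) (Real.sqrt_nonneg _)

lemma qup_lt_one {ε : ℝ} (hε : 0 < ε) : Real.exp (-(ε/2)) * Real.sqrt (1 + ε) < 1 := by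
  have h0 := qup_nonneg hε
  have hsq : (Real.exp (-(ε/2)) * Real.sqrt (1 + ε)) ^ 2 = Real.exp (-ε) * (1 + ε) := by
    rw [mul_pow, Real.sq_sqrt (by linarith),
      show (Real.exp (-(ε/2))) ^ 2 = Real.exp ((2:ℕ) * (-(ε/2))) by
        rw [Real.exp_nat_mul]]
    norm_num
    exact Or.inl (by ring)
  have h2 := Real.add_one_lt_exp (ne_of_gt hε)
  have h3 : Real.exp (-ε) * Real.exp ε = 1 := by rw [← Real.exp_add]; simp
  have h4 : Real.exp (-ε) * (1 + ε) < 1 := by nlinarith [Real.exp_pos (-ε)]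
  nlinarith

lemma qlo_nonneg {ε : ℝ} : 0 ≤ Real.exp (ε/2) * Real.sqrt (1 - ε) :=
  mul_nonneg (Real.exp_nonneg _) (Real.sqrt_nonneg _)

lemma qlo_lt_one {ε : ℝ} (hε : 0 < ε) (hε1 : ε < 1) :
    Real.exp (ε/2) * Real.sqrt (1 - ε) < 1 := by
  have h0 : (0:ℝ) ≤ Real.exp (ε/2) * Real.sqrt (1 - ε) := qlo_nonneg
  have hsq : (Real.exp (ε/2) * Real.sqrt (1 - ε)) ^ 2 = Real.exp ε * (1 - ε) := by
    rw [mul_pow, Real.sq_sqrt (by linarith),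
      show (Real.exp (ε/2)) ^ 2 = Real.exp ((2:ℕ) * (ε/2)) by rw [Real.exp_nat_mul]]
    norm_num
    exact Or.inl (by ring)
  have h2 := Real.add_one_lt_exp (show -ε ≠ 0 by simp [ne_of_gt hε])
  have h3 : Real.exp (-ε) * Real.exp ε = 1 := by rw [← Real.exp_add]; simp
  have h4 : Real.exp ε * (1 - ε) < 1 := by nlinarith [Real.exp_pos ε, Real.exp_pos (-ε)]
  nlinarith

lemma chiSq_prob {k : ℕ} (hk : 1 ≤ k) : IsProbabilityMeasure (chiSqMeasure k) := by
  refine isProbabilityMeasure_gammaMeasure ?_ (by norm_num)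
  have : (1:ℝ) ≤ (k:ℝ) := by exact_mod_cast hk
  linarith

open scoped ENNReal

lemma summable_parts {ε : ℝ} (hε : 0 < ε) :
    (Summable fun M : ℕ =>
        (chiSqMeasure (M + 2) (Set.Iio (((M : ℝ) + 2) * (1 - ε)))).toReal) ∧
      (Summable fun M : ℕ =>
        ((M : ℝ) + 1) *
          (chiSqMeasure (M + 1) (Set.Ioi (((M : ℝ) + 1) * (1 + ε)))).toReal) := by
  set e := min ε (1/2) with hedef
  have he0 : 0 < e := lt_min hε (by norm_num)
  have he1 : e < 1 := lt_of_le_of_lt (min_le_right _ _) (by norm_num)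
  have hee : e ≤ ε := min_le_left _ _
  constructor
  · have hsum : Summable fun M : ℕ => (Real.exp (e/2) * Real.sqrt (1 - e)) ^ (M + 2) :=
      (summable_geometric_of_lt_one qlo_nonneg (qlo_lt_one he0 he1)).comp_injective
        (add_left_injective 2)
    refine Summable.of_nonneg_of_le (fun M => ENNReal.toReal_nonneg) (fun M => ?_) hsum
    refine ENNReal.toReal_le_of_le_ofReal (by positivity) ?_
    have hMc : (0:ℝ) ≤ (M:ℝ) := Nat.cast_nonneg M
    calc chiSqMeasure (M + 2) (Set.Iio (((M : ℝ) + 2) * (1 - ε)))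
        ≤ chiSqMeasure (M + 2) (Set.Iio ((((M + 2 : ℕ)) : ℝ) * (1 - e))) := by
          refine measure_mono (Set.Iio_subset_Iio ?_)
          push_cast
          nlinarith
      _ ≤ ENNReal.ofReal ((Real.exp (e/2) * Real.sqrt (1 - e)) ^ (M + 2)) :=
          lower_tail he0 he1 (by omega)
  · have h1 : Summable fun n : ℕ => (n:ℝ) ^ 1 * (Real.exp (-(e/2)) * Real.sqrt (1 + e)) ^ n :=
      summable_pow_mul_geometric_of_norm_lt_one 1
        (by rw [Real.norm_eq_abs, abs_of_nonneg (qup_nonneg he0)]; exact qup_lt_one he0)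
    have hsum : Summable fun M : ℕ =>
        ((M:ℝ) + 1) * (Real.exp (-(e/2)) * Real.sqrt (1 + e)) ^ (M + 1) := by
      refine (h1.comp_injective (add_left_injective 1)).congr fun M => ?_
      simp only [Function.comp_apply]
      push_cast
      ring
    refine Summable.of_nonneg_of_le
      (fun M => mul_nonneg (by positivity) ENNReal.toReal_nonneg) (fun M => ?_) hsum
    refine mul_le_mul_of_nonneg_left ?_ (by positivity)
    refine ENNReal.toReal_le_of_le_ofReal (by positivity) ?_
    have : (((M + 1 : ℕ)) : ℝ) * (1 + e) ≤ ((M : ℝ) + 1) * (1 + ε) := by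
      push_cast
      have hMc : (0:ℝ) ≤ (M:ℝ) := Nat.cast_nonneg M
      nlinarith
    exact upper_tail he0 (by omega) (le_refl (M+1)) this

lemma ae_part {Ω : Type*} [MeasurableSpace Ω] (μ : Measure Ω) [IsProbabilityMeasure μ]
    (X : ℕ → ℕ → Ω → ℝ)
    (hlaw : ∀ M k, 1 ≤ k → k ≤ M →
      μ.map (fun ω => (X M k ω) ^ 2) = chiSqMeasure k) :
    ∀ᵐ ω ∂μ, Tendsto
      (fun M : ℕ => (⨆ k : Fin M, (X M (k + 1) ω) ^ 2) / M) atTop (nhds 1) := by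
  have hmeas : ∀ M k, 1 ≤ k → k ≤ M → AEMeasurable (fun ω => (X M k ω) ^ 2) μ := by
    intro M k h1 h2
    by_contra h
    have hmap := hlaw M k h1 h2
    rw [Measure.map_of_not_aemeasurable h] at hmap
    haveI := chiSq_prob h1
    have huniv : (chiSqMeasure k) Set.univ = 1 := measure_univ
    rw [← hmap] at huniv
    simp at huniv
  set e : ℕ → ℝ := fun n => 1 / (n + 2) with hedef
  have he0 : ∀ n, 0 < e n := fun n => by positivity
  have he1 : ∀ n, e n < 1 := fun n => by
    rw [hedef]
    simp only
    rw [div_lt_one (by positivity)]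
    have : (0:ℝ) ≤ (n:ℝ) := Nat.cast_nonneg n
    linarith
  set s : ℕ → ℕ → Set Ω := fun n M =>
    (⋃ k : Fin M, {ω | (M:ℝ) * (1 + e n) < (X M (k + 1) ω) ^ 2}) ∪
      {ω | (X M M ω) ^ 2 < (M:ℝ) * (1 - e n)} with hsdef
  have hbound : ∀ n M, μ (s n M) ≤
      (M : ℝ≥0∞) * ENNReal.ofReal ((Real.exp (-(e n / 2)) * Real.sqrt (1 + e n)) ^ M)
        + ENNReal.ofReal ((Real.exp (e n / 2) * Real.sqrt (1 - e n)) ^ M) := by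
    intro n M
    rcases Nat.eq_zero_or_pos M with rfl | hM
    · have hempty : s n 0 = ∅ := by
        rw [hsdef]
        ext ω
        simp only [Nat.cast_zero, zero_mul, Set.mem_union, Set.mem_iUnion, Set.mem_setOf_eq,
          Set.mem_empty_iff_false, iff_false, not_or, not_exists, not_lt]
        exact ⟨fun k => k.elim0, sq_nonneg _⟩
      rw [hempty]
      simp
    · refine le_trans (measure_union_le _ _) (add_le_add ?_ ?_)
      · refine le_trans (measure_iUnion_le _) ?_
        have hone : ∀ k : Fin M, μ {ω | (M:ℝ) * (1 + e n) < (X M (k + 1) ω) ^ 2}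
            ≤ ENNReal.ofReal ((Real.exp (-(e n / 2)) * Real.sqrt (1 + e n)) ^ M) := by
          intro k
          have hk1 : 1 ≤ (k:ℕ) + 1 := Nat.le_add_left 1 k
          have hk2 : (k:ℕ) + 1 ≤ M := k.2
          have hset : {ω | (M:ℝ) * (1 + e n) < (X M (k + 1) ω) ^ 2}
              = (fun ω => (X M ((k:ℕ) + 1) ω) ^ 2) ⁻¹' (Set.Ioi ((M:ℝ) * (1 + e n))) := rfl
          rw [hset, ← Measure.map_apply_of_aemeasurable (hmeas M ((k:ℕ)+1) hk1 hk2)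
            measurableSet_Ioi, hlaw M ((k:ℕ)+1) hk1 hk2]
          exact upper_tail (he0 n) hk1 hk2 le_rfl
        calc ∑' k : Fin M, μ {ω | (M:ℝ) * (1 + e n) < (X M (k + 1) ω) ^ 2}
            ≤ ∑' _k : Fin M,
              ENNReal.ofReal ((Real.exp (-(e n / 2)) * Real.sqrt (1 + e n)) ^ M) :=
              ENNReal.tsum_le_tsum hone
          _ = (M : ℝ≥0∞) * ENNReal.ofReal ((Real.exp (-(e n / 2)) * Real.sqrt (1 + e n)) ^ M) := by
              rw [tsum_fintype]
              simp [Finset.sum_const, nsmul_eq_mul]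
      · have hset : {ω | (X M M ω) ^ 2 < (M:ℝ) * (1 - e n)}
            = (fun ω => (X M M ω) ^ 2) ⁻¹' (Set.Iio ((M:ℝ) * (1 - e n))) := rfl
        rw [hset, ← Measure.map_apply_of_aemeasurable (hmeas M M hM le_rfl) measurableSet_Iio,
          hlaw M M hM le_rfl]
        exact lower_tail (he0 n) (he1 n) hM
  have hfin : ∀ n, (∑' M, μ (s n M)) ≠ ⊤ := by
    intro n
    have hqu0 : 0 ≤ Real.exp (-(e n / 2)) * Real.sqrt (1 + e n) := qup_nonneg (he0 n)
    have hqu1 := qup_lt_one (he0 n)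
    have hql0 : 0 ≤ Real.exp (e n / 2) * Real.sqrt (1 - e n) := qlo_nonneg
    have hql1 := qlo_lt_one (he0 n) (he1 n)
    set qu := Real.exp (-(e n / 2)) * Real.sqrt (1 + e n)
    set ql := Real.exp (e n / 2) * Real.sqrt (1 - e n)
    have hg : Summable (fun M : ℕ => (M:ℝ) * qu ^ M + ql ^ M) := by
      apply Summable.add
      · simpa using summable_pow_mul_geometric_of_norm_lt_one 1
          (r := qu) (by rwa [Real.norm_eq_abs, abs_of_nonneg hqu0])
      · exact summable_geometric_of_lt_one hql0 hql1
    have hgn : ∀ M : ℕ, 0 ≤ (M:ℝ) * qu ^ M + ql ^ M := fun M => by positivity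
    have hle : (∑' M, μ (s n M)) ≤ ∑' M : ℕ, ENNReal.ofReal ((M:ℝ) * qu ^ M + ql ^ M) := by
      refine ENNReal.tsum_le_tsum fun M => le_trans (hbound n M) (le_of_eq ?_)
      rw [ENNReal.ofReal_add (by positivity) (by positivity),
        ENNReal.ofReal_mul (Nat.cast_nonneg M), ENNReal.ofReal_natCast]
    refine ne_top_of_le_ne_top ?_ hle
    rw [← ENNReal.ofReal_tsum_of_nonneg hgn hg]
    exact ENNReal.ofReal_ne_top
  have hae : ∀ᵐ ω ∂μ, ∀ n : ℕ, ∀ᶠ M in atTop, ω ∉ s n M :=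
    ae_all_iff.mpr fun n => ae_eventually_notMem (hfin n)
  filter_upwards [hae] with ω hω
  rw [Metric.tendsto_atTop]
  intro δ hδ
  obtain ⟨n, hn⟩ := exists_nat_gt (1 / δ)
  have hend : e n < δ := by
    rw [hedef]
    simp only
    rw [div_lt_iff₀ (by positivity)]
    have h1 : δ * (1/δ) = 1 := by field_simp
    nlinarith [Nat.cast_nonneg (α := ℝ) n]
  obtain ⟨N₀, hN₀⟩ := eventually_atTop.mp (hω n)
  refine ⟨max N₀ 1, fun M hM => ?_⟩
  have hM1 : 1 ≤ M := le_trans (le_max_right _ _) hM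
  have hMpos : (0:ℝ) < M := by exact_mod_cast hM1
  have hs := hN₀ M (le_trans (le_max_left _ _) hM)
  rw [hsdef] at hs
  simp only [Set.mem_union, Set.mem_iUnion, Set.mem_setOf_eq, not_or, not_exists, not_lt] at hs
  obtain ⟨hA, hB⟩ := hs
  haveI : Nonempty (Fin M) := ⟨⟨0, hM1⟩⟩
  have hsup_le : (⨆ k : Fin M, (X M (k + 1) ω) ^ 2) ≤ (M:ℝ) * (1 + e n) := ciSup_le hA
  have hsup_ge : (M:ℝ) * (1 - e n) ≤ ⨆ k : Fin M, (X M (k + 1) ω) ^ 2 := by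
    refine le_trans hB ?_
    have h4 := le_ciSup (f := fun k : Fin M => (X M (k + 1) ω) ^ 2)
      (Set.Finite.bddAbove (Set.finite_range _)) ⟨M - 1, by omega⟩
    have h5 : (M - 1) + 1 = M := by omega
    simpa [h5] using h4
  rw [Real.dist_eq]
  have h1 : (⨆ k : Fin M, (X M (k + 1) ω) ^ 2) / M ≤ 1 + e n := by
    rw [div_le_iff₀ hMpos]; linarith [hsup_le]
  have h2 : 1 - e n ≤ (⨆ k : Fin M, (X M (k + 1) ω) ^ 2) / M := by
    rw [le_div_iff₀ hMpos]; linarith [hsup_ge]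
  have habs : |(⨆ k : Fin M, (X M (k + 1) ω) ^ 2) / M - 1| ≤ e n :=
    abs_le.mpr ⟨by linarith, by linarith⟩
  linarith

end ChiAux

/-- For every `ε > 0`, the series `∑_{M ≥ 2} P(χ²_M < M(1-ε))` and
`∑_{M ≥ 1} M·P(χ²_M > M(1+ε))` converge; consequently, for (possibly dependent)
chi-distributed variables `χ_{M,k}` with `k` degrees of freedom,
`max_{1 ≤ k ≤ M} χ²_{M,k}/M → 1` almost surely as `M → ∞`. -/
theorem max_chiSq_over_M_tendsto_one_ae
    {Ω : Type*} [MeasurableSpace Ω] (μ : Measure Ω) [IsProbabilityMeasure μ]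
    (X : ℕ → ℕ → Ω → ℝ)
    (hpos : ∀ M k ω, 0 ≤ X M k ω)
    (hlaw : ∀ M k, 1 ≤ k → k ≤ M →
      μ.map (fun ω => (X M k ω) ^ 2) = chiSqMeasure k) :
    (∀ ε : ℝ, 0 < ε →
      (Summable fun M : ℕ =>
        (chiSqMeasure (M + 2) (Set.Iio (((M : ℝ) + 2) * (1 - ε)))).toReal) ∧
      (Summable fun M : ℕ =>
        ((M : ℝ) + 1) *
          (chiSqMeasure (M + 1) (Set.Ioi (((M : ℝ) + 1) * (1 + ε)))).toReal)) ∧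
    ∀ᵐ ω ∂μ, Tendsto
      (fun M : ℕ => (⨆ k : Fin M, (X M (k + 1) ω) ^ 2) / M) atTop (nhds 1) := by
  exact ⟨fun ε hε => summable_parts hε, ae_part μ X hlaw⟩
end
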